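/- Let R be a commutative ring and S a multiplicative subset of R. Any finite direct sum of u-S-flat R-modules is u-S-flat. -/

import Mathlib

universe u v

open LinearMap TensorProduct DirectSum

/-- An `R`-module `T` is `u`-`S`-torsion if there exists `s ∈ S` with `s • T = 0`. -/
def IsUSTorsion {R : Type u} [CommRing R] (S : Submonoid R)
    (M : Type v) [AddCommGroup M] [Module R M] : Prop :=
  ∃ s ∈ S, ∀ m : M, s • m = 0

/-- A sequence `A →f B →g C` of `R`-modules is `u`-`S`-exact at `B` if there is `s ∈ S`
with `s • ker g ⊆ im f` and `s • im f ⊆ ker g`. -/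
def IsUSExactAt {R : Type u} [CommRing R] (S : Submonoid R)
    {A B C : Type*} [AddCommGroup A] [AddCommGroup B] [AddCommGroup C]
    [Module R A] [Module R B] [Module R C]
    (f : A →ₗ[R] B) (g : B →ₗ[R] C) : Prop :=
  ∃ s ∈ S, (∀ b ∈ LinearMap.ker g, s • b ∈ LinearMap.range f) ∧
    (∀ b ∈ LinearMap.range f, s • b ∈ LinearMap.ker g)

/-- `0 → A →f B →g C → 0` is a `u`-`S`-exact sequence: `ker f` and `coker g` are
`u`-`S`-torsion and the sequence is `u`-`S`-exact at `B`. -/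
def IsUSShortExact {R : Type u} [CommRing R] (S : Submonoid R)
    {A B C : Type*} [AddCommGroup A] [AddCommGroup B] [AddCommGroup C]
    [Module R A] [Module R B] [Module R C]
    (f : A →ₗ[R] B) (g : B →ₗ[R] C) : Prop :=
  (∃ s ∈ S, ∀ a ∈ LinearMap.ker f, s • a = 0) ∧
    (∃ s ∈ S, ∀ c : C, s • c ∈ LinearMap.range g) ∧
    IsUSExactAt S f g

/-- An `R`-module `F` is `u`-`S`-flat if for every `u`-`S`-exact sequence
`0 → A → B → C → 0` the induced sequence `0 → A ⊗ F → B ⊗ F → C ⊗ F → 0` is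
`u`-`S`-exact. -/
def IsUSFlat {R : Type u} [CommRing R] (S : Submonoid R)
    (F : Type v) [AddCommGroup F] [Module R F] : Prop :=
  ∀ (A B C : Type v) [AddCommGroup A] [AddCommGroup B] [AddCommGroup C]
    [Module R A] [Module R B] [Module R C]
    (f : A →ₗ[R] B) (g : B →ₗ[R] C),
    IsUSShortExact S f g →
    IsUSShortExact S (LinearMap.rTensor F f) (LinearMap.rTensor F g)


section helpers

variable {R : Type u} [CommRing R] {ι : Type} [DecidableEq ι]

lemma mapRange_of' {N P : ι → Type v} [∀ i, AddCommGroup (N i)] [∀ i, AddCommGroup (P i)]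
    [∀ i, Module R (N i)] [∀ i, Module R (P i)] (φ : ∀ i, N i →ₗ[R] P i) (i : ι) (n : N i) :
    (DFinsupp.mapRange.linearMap φ : (⨁ i, N i) →ₗ[R] ⨁ i, P i) (DirectSum.of N i n)
      = DirectSum.of P i (φ i n) :=
  DFinsupp.mapRange_single (hf := fun i => map_zero (φ i))

omit [DecidableEq ι] in
lemma mapRange_apply' {N P : ι → Type v} [∀ i, AddCommGroup (N i)] [∀ i, AddCommGroup (P i)]
    [∀ i, Module R (N i)] [∀ i, Module R (P i)] (φ : ∀ i, N i →ₗ[R] P i)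
    (x : ⨁ i, N i) (i : ι) :
    (DFinsupp.mapRange.linearMap φ : (⨁ i, N i) →ₗ[R] ⨁ i, P i) x i = φ i (x i) :=
  DFinsupp.mapRange_apply (fun i => ⇑(φ i)) (fun i => map_zero (φ i)) x i

lemma mem_range_mapRange {N P : ι → Type v} [∀ i, AddCommGroup (N i)] [∀ i, AddCommGroup (P i)]
    [∀ i, Module R (N i)] [∀ i, Module R (P i)] (φ : ∀ i, N i →ₗ[R] P i)
    (x : ⨁ i, P i) (h : ∀ i, x i ∈ LinearMap.range (φ i)) :
    x ∈ LinearMap.range (DFinsupp.mapRange.linearMap φ : (⨁ i, N i) →ₗ[R] ⨁ i, P i) := by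
  classical
  rw [← DirectSum.sum_support_of x]
  apply Submodule.sum_mem
  intro i _
  obtain ⟨n, hn⟩ := h i
  exact ⟨DirectSum.of N i n, by rw [mapRange_of', hn]⟩

variable {A B : Type v} [AddCommGroup A] [AddCommGroup B] [Module R A] [Module R B]
variable (M : ι → Type v) [∀ i, AddCommGroup (M i)] [∀ i, Module R (M i)]

lemma directSumRight_rTensor (f : A →ₗ[R] B) (x : A ⊗[R] (⨁ i, M i)) :
    directSumRight R R B M (rTensor (⨁ i, M i) f x) =
      DFinsupp.mapRange.linearMap (fun i => rTensor (M i) f) (directSumRight R R A M x) := by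
  induction x with
  | zero => simp
  | add y z hy hz => simp only [map_add, hy, hz]
  | tmul a y =>
    induction y using DirectSum.induction_on with
    | zero => simp [tmul_zero]
    | of i m =>
      rw [← DirectSum.lof_eq_of R, rTensor_tmul, directSumRight_tmul_lof, directSumRight_tmul_lof,
        DirectSum.lof_eq_of R, DirectSum.lof_eq_of R, mapRange_of', rTensor_tmul]
    | add y z hy hz => simp only [tmul_add, map_add, hy, hz]

lemma prod_smul_eq {ι' : Type} [Fintype ι'] [DecidableEq ι'] {V : Type*} [AddCommGroup V] [Module R V]
    (s : ι' → R) (j : ι') (v : V) :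
    (∏ i, s i) • v = (∏ i ∈ Finset.univ.erase j, s i) • (s j • v) := by
  rw [smul_smul, Finset.prod_erase_mul _ _ (Finset.mem_univ j)]

end helpers

/-- Any finite direct sum of `u`-`S`-flat modules is `u`-`S`-flat. -/
theorem isUSFlat_directSum {R : Type u} [CommRing R] (S : Submonoid R)
    (ι : Type) [Finite ι] (M : ι → Type v)
    [∀ i, AddCommGroup (M i)] [∀ i, Module R (M i)]
    (hM : ∀ i, IsUSFlat S (M i)) : IsUSFlat S (DirectSum ι M) := by
  classical
  cases nonempty_fintype ι
  intro A B C _ _ _ _ _ _ f g hfg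
  have H : ∀ i, IsUSShortExact S (rTensor (M i) f) (rTensor (M i) g) :=
    fun i => hM i A B C f g hfg
  choose s1 hs1S hs1 using fun i => (H i).1
  choose s2 hs2S hs2 using fun i => (H i).2.1
  choose s3 hs3S hs3a hs3b using fun i => (H i).2.2
  set eA := directSumRight R R A M with heA
  set eB := directSumRight R R B M with heB
  set eC := directSumRight R R C M with heC
  refine ⟨⟨∏ i, s1 i, prod_mem fun i _ => hs1S i, ?_⟩,
    ⟨∏ i, s2 i, prod_mem fun i _ => hs2S i, ?_⟩,
    ⟨∏ i, s3 i, prod_mem fun i _ => hs3S i, ?_, ?_⟩⟩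
  · -- kernel of rTensor f is torsion
    intro x hx
    rw [LinearMap.mem_ker] at hx
    apply eA.injective
    rw [map_smul, map_zero]
    refine DFinsupp.ext fun j => ?_
    rw [DFinsupp.smul_apply, prod_smul_eq s1 j, hs1 j _ ?_, smul_zero, DFinsupp.zero_apply]
    rw [LinearMap.mem_ker, ← mapRange_apply' (fun i => rTensor (M i) f) (eA x) j,
      ← directSumRight_rTensor M f x, hx, map_zero, DFinsupp.zero_apply]
  · -- cokernel of rTensor g is torsion
    intro c
    have h : ∀ i, ((∏ i, s2 i) • eC c) i ∈ LinearMap.range (rTensor (M i) g) := by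
      intro i
      rw [DFinsupp.smul_apply, prod_smul_eq s2 i]
      exact Submodule.smul_mem _ _ (hs2 i (eC c i))
    obtain ⟨x, hx⟩ := mem_range_mapRange _ _ h
    refine ⟨eB.symm x, eC.injective ?_⟩
    rw [directSumRight_rTensor M g (eB.symm x)]
    show DFinsupp.mapRange.linearMap _ (eB (eB.symm x)) = _
    rw [LinearEquiv.apply_symm_apply, hx, map_smul]
  · -- exactness: ker → range
    intro x hx
    rw [LinearMap.mem_ker] at hx
    have h : ∀ i, ((∏ i, s3 i) • eB x) i ∈ LinearMap.range (rTensor (M i) f) := by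
      intro i
      rw [DFinsupp.smul_apply, prod_smul_eq s3 i]
      refine Submodule.smul_mem _ _ (hs3a i _ ?_)
      rw [LinearMap.mem_ker, ← mapRange_apply' (fun i => rTensor (M i) g) (eB x) i,
        ← directSumRight_rTensor M g x, hx, map_zero, DFinsupp.zero_apply]
    obtain ⟨a, ha⟩ := mem_range_mapRange _ _ h
    refine ⟨eA.symm a, eB.injective ?_⟩
    rw [directSumRight_rTensor M f (eA.symm a)]
    show DFinsupp.mapRange.linearMap _ (eA (eA.symm a)) = _
    rw [LinearEquiv.apply_symm_apply, ha, map_smul]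
  · -- exactness: range → ker
    rintro x ⟨a, rfl⟩
    rw [LinearMap.mem_ker]
    apply eC.injective
    rw [map_zero, directSumRight_rTensor M g]
    refine DFinsupp.ext fun j => ?_
    rw [DFinsupp.zero_apply, mapRange_apply', LinearEquiv.map_smul, DFinsupp.smul_apply, map_smul,
      prod_smul_eq s3 j]
    have hj : s3 j • (eB (rTensor (⨁ i, M i) f a)) j ∈ LinearMap.ker (rTensor (M j) g) := by
      refine hs3b j _ ?_
      rw [directSumRight_rTensor M f a, mapRange_apply']
      exact ⟨eA a j, rfl⟩
    rw [LinearMap.mem_ker, map_smul] at hj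
    rw [hj, smul_zero]
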